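/- Let f : ℝ^n → ℝ be bounded below and Lipschitz continuous with some constant L' > 0, let σ : [0,∞) → [0,∞) be a forcing function, and let M ∈ ℕ. Let {w^k} ⊂ ℝ^n and {R^k} ⊂ ℝ be sequences such that for every k: f(w^k) ≤ R^k ≤ max_{0 ≤ j ≤ min(k,M)} f(w^{k−j}) and f(w^{k+1}) ≤ R^k − σ(‖w^{k+1} − w^k‖). Then the sequence {f(w^k)} is convergent. -/

import Mathlib

open Filter Finset

/-- `refMax g M k = max_{0 ≤ j ≤ min(k,M)} g (k - j)`, the nonmonotone reference
maximum over the last `min(k,M)+1` values. -/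
noncomputable def refMax (g : ℕ → ℝ) (M k : ℕ) : ℝ :=
  (Finset.range (min k M + 1)).sup' Finset.nonempty_range_add_one fun j => g (k - j)

/-- Lemma 1 from Grippo et al., part (iv).
If `f` is bounded below and Lipschitz, `σ` is a forcing function and the
sequence satisfies `f(w^k) ≤ R^k ≤ max_{0≤j≤min(k,M)} f(w^{k-j})` and
`f(w^{k+1}) ≤ R^k - σ(‖w^{k+1} - w^k‖)`, then `{f(w^k)}` converges. -/
theorem stmt_12 {n : ℕ}
    (f : EuclideanSpace ℝ (Fin n) → ℝ)
    (hbdd : BddBelow (Set.range f))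
    (L' : ℝ) (hL' : 0 < L')
    (hlip : ∀ u v : EuclideanSpace ℝ (Fin n), |f u - f v| ≤ L' * ‖u - v‖)
    (σ : ℝ → ℝ) (hσnonneg : ∀ t, 0 ≤ t → 0 ≤ σ t)
    (hσforcing : ∀ t : ℕ → ℝ, (∀ k, 0 ≤ t k) →
      Tendsto (fun k => σ (t k)) atTop (nhds 0) → Tendsto t atTop (nhds 0))
    (M : ℕ)
    (w : ℕ → EuclideanSpace ℝ (Fin n)) (R : ℕ → ℝ)
    (hRlow : ∀ k, f (w k) ≤ R k)
    (hRhigh : ∀ k, R k ≤ refMax (fun k => f (w k)) M k)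
    (hdecr : ∀ k, f (w (k + 1)) ≤ R k - σ ‖w (k + 1) - w k‖) :
    ∃ l : ℝ, Tendsto (fun k => f (w k)) atTop (nhds l) := by
  set g : ℕ → ℝ := fun k => f (w k) with hg
  set s : ℕ → ℝ := fun k => ‖w (k + 1) - w k‖ with hs
  set V : ℕ → ℝ := fun k => refMax g M k with hgV'
  obtain ⟨B, hB⟩ := hbdd
  have hBg : ∀ k, B ≤ g k := fun k => hB ⟨w k, rfl⟩
  have hgV : ∀ k, g k ≤ V k := by
    intro k
    have h0 : (0 : ℕ) ∈ Finset.range (min k M + 1) := Finset.mem_range.2 (Nat.succ_pos _)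
    exact Finset.le_sup' (fun j => g (k - j)) h0
  have h1 : ∀ k, g (k + 1) ≤ V k - σ (s k) := fun k =>
    le_trans (hdecr k) (by have := hRhigh k; simp only [hgV', hg, hs]; linarith)
  have hσs : ∀ k, 0 ≤ σ (s k) := fun k => hσnonneg _ (norm_nonneg _)
  have hVstep : ∀ k, V (k + 1) ≤ V k := by
    intro k
    apply Finset.sup'_le
    intro j hj
    rcases Nat.eq_zero_or_pos j with h0 | hpos
    · subst h0
      simpa using le_trans (h1 k) (by linarith [hσs k])
    · have hjr := Finset.mem_range.1 hj
      have hj' : j - 1 ∈ Finset.range (min k M + 1) := Finset.mem_range.2 (by omega)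
      have heq : g (k + 1 - j) = g (k - (j - 1)) := by congr 1; omega
      rw [heq]
      exact Finset.le_sup' (fun j => g (k - j)) hj'
  have hVanti : Antitone V := antitone_nat_of_succ_le hVstep
  have hVbdd : BddBelow (Set.range V) :=
    ⟨B, by rintro _ ⟨k, rfl⟩; exact le_trans (hBg k) (hgV k)⟩
  have hVtend : Tendsto V atTop (nhds (⨅ k, V k)) := tendsto_atTop_ciInf hVanti hVbdd
  set Vs := ⨅ k, V k with hVs
  have hch : ∀ k, ∃ j ∈ Finset.range (min k M + 1), V k = g (k - j) := fun k =>
    Finset.exists_mem_eq_sup' Finset.nonempty_range_add_one _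
  choose jf hjf hVjf using hch
  set ℓ : ℕ → ℕ := fun k => k - jf k with hℓdef
  have hjfM : ∀ k, jf k ≤ M := fun k => by
    have := Finset.mem_range.1 (hjf k); omega
  have hℓge : ∀ k, k - M ≤ ℓ k := fun k => Nat.sub_le_sub_left (hjfM k) k
  have hℓle : ∀ k, ℓ k ≤ k := fun k => Nat.sub_le _ _
  have hgℓ : ∀ k, g (ℓ k) = V k := fun k => (hVjf k).symm
  have hℓtop : Tendsto ℓ atTop atTop :=
    tendsto_atTop_mono hℓge (tendsto_sub_atTop_nat M)
  have main : ∀ j : ℕ, Tendsto (fun k => g (ℓ k - j)) atTop (nhds Vs) := by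
    intro j
    induction j with
    | zero => simpa [hgℓ] using hVtend
    | succ j ih =>
      have hidx : Tendsto (fun k => ℓ k - (j + 1)) atTop atTop :=
        (tendsto_sub_atTop_nat (j + 1)).comp hℓtop
      have hVcomp : Tendsto (fun k => V (ℓ k - (j + 1))) atTop (nhds Vs) := hVtend.comp hidx
      have hev : ∀ᶠ k in atTop, j + 1 ≤ ℓ k := by
        filter_upwards [eventually_ge_atTop (M + j + 1)] with k hk
        have := hℓge k; omega
      have hσt : Tendsto (fun k => σ (s (ℓ k - (j + 1)))) atTop (nhds 0) := by
        apply squeeze_zero' (Eventually.of_forall fun k => hσs _)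
          (g := fun k => V (ℓ k - (j + 1)) - g (ℓ k - j))
        · filter_upwards [hev] with k hk
          have h2 : ℓ k - (j + 1) + 1 = ℓ k - j := by omega
          have h3 := h1 (ℓ k - (j + 1))
          rw [h2] at h3
          linarith
        · simpa using hVcomp.sub ih
      have hstend : Tendsto (fun k => s (ℓ k - (j + 1))) atTop (nhds 0) :=
        hσforcing _ (fun k => norm_nonneg _) hσt
      have hdiff : Tendsto (fun k => g (ℓ k - j) - g (ℓ k - (j + 1))) atTop (nhds 0) := by
        apply squeeze_zero_norm' ?_ (by simpa using hstend.const_mul L')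
        filter_upwards [hev] with k hk
        have h2 : ℓ k - (j + 1) + 1 = ℓ k - j := by omega
        rw [← h2]
        simpa [hg, hs, Real.norm_eq_abs] using hlip (w (ℓ k - (j + 1) + 1)) (w (ℓ k - (j + 1)))
      have h3 : Tendsto (fun k => g (ℓ k - j) - (g (ℓ k - j) - g (ℓ k - (j + 1)))) atTop
          (nhds (Vs - 0)) := ih.sub hdiff
      simpa using h3
  refine ⟨Vs, ?_⟩
  have hcomp : ∀ j : ℕ, Tendsto (fun k => |g (ℓ (k + M + 1) - j) - Vs|) atTop (nhds 0) := by
    intro j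
    have h4 : Tendsto (fun k : ℕ => k + (M + 1)) atTop atTop := tendsto_add_atTop_nat (M + 1)
    have h5 : Tendsto (fun k => g (ℓ (k + M + 1) - j)) atTop (nhds Vs) := by
      have := (main j).comp h4
      simpa [Function.comp_def, ← Nat.add_assoc] using this
    have := (h5.sub_const Vs).abs
    simpa using this
  have hF : Tendsto (fun k => ∑ j ∈ Finset.Icc 1 (M + 1), |g (ℓ (k + M + 1) - j) - Vs|)
      atTop (nhds 0) := by
    have := tendsto_finset_sum (Finset.Icc 1 (M + 1))
      (fun j _ => hcomp j)
    simpa using this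
  have hle : ∀ k, |g k - Vs| ≤ ∑ j ∈ Finset.Icc 1 (M + 1), |g (ℓ (k + M + 1) - j) - Vs| := by
    intro k
    have hub := hℓle (k + M + 1)
    have hlb := hℓge (k + M + 1)
    set d := ℓ (k + M + 1) - k with hd
    have hmem : d ∈ Finset.Icc 1 (M + 1) := Finset.mem_Icc.2 (by omega)
    have hidx : ℓ (k + M + 1) - d = k := by omega
    have h6 : |g (ℓ (k + M + 1) - d) - Vs| ≤
        ∑ j ∈ Finset.Icc 1 (M + 1), |g (ℓ (k + M + 1) - j) - Vs| :=
      Finset.single_le_sum (f := fun j => |g (ℓ (k + M + 1) - j) - Vs|)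
        (fun j _ => abs_nonneg _) hmem
    rw [hidx] at h6
    exact h6
  have habs : Tendsto (fun k => |g k - Vs|) atTop (nhds 0) :=
    squeeze_zero (fun k => abs_nonneg _) hle hF
  have : Tendsto g atTop (nhds Vs) := by
    rw [tendsto_iff_norm_sub_tendsto_zero]
    simpa [Real.norm_eq_abs] using habs
  exact this
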